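/- arXiv:2306.16364 — 2 statements merged into one kernel-verified Lean document; each statement's English description precedes it below -/
import Mathlib

section
/- A nonempty word w is primitive if and only if for all m, whenever w^m = u · w · v with u and v nonempty, u = w^n and v = w^{n'} for some n, n' < m. -/
/-- `wpow w n` is the `n`-fold concatenation `w^n` of the word `w` (a list), with `w^0 = []`. -/
def wpow {α : Type*} (w : List α) (n : ℕ) : List α := (List.replicate n w).flatten

/-- A nonempty word is primitive if it is not a power of any word other than itself. -/
def Primitive {α : Type*} (w : List α) : Prop :=
  w ≠ [] ∧ ∀ (z : List α) (m : ℕ), z ≠ [] → w = wpow z m → w = z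

/-- `expw w u` is the maximal `m` such that `w^m` is a factor of `u`. -/
noncomputable def expw {α : Type*} (w u : List α) : ℕ := sSup {m : ℕ | wpow w m <:+: u}

/-- Two words are conjugate if `w = x·y` and `v = y·x`. -/
def Conj {α : Type*} (w v : List α) : Prop := ∃ x y : List α, w = x ++ y ∧ v = y ++ x

lemma wpow_zero {α : Type*} (w : List α) : wpow w 0 = [] := rfl

lemma wpow_succ {α : Type*} (w : List α) (n : ℕ) : wpow w (n + 1) = w ++ wpow w n := by
  simp [wpow, List.replicate_succ]

lemma wpow_one {α : Type*} (w : List α) : wpow w 1 = w := by simp [wpow]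

lemma wpow_add {α : Type*} (w : List α) (a b : ℕ) :
    wpow w (a + b) = wpow w a ++ wpow w b := by
  induction a with
  | zero => simp [wpow_zero]
  | succ k ih =>
      have : k + 1 + b = (k + b) + 1 := by omega
      rw [this, wpow_succ, ih, wpow_succ, List.append_assoc]

lemma wpow_length {α : Type*} (w : List α) (n : ℕ) :
    (wpow w n).length = n * w.length := by
  induction n with
  | zero => simp [wpow_zero]
  | succ k ih => rw [wpow_succ]; simp [ih]; ring

/-- Commuting words are powers of a common word. -/
lemma comm_pow {α : Type*} : ∀ (N : ℕ) (a b : List α), a.length + b.length ≤ N →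
    a ++ b = b ++ a → ∃ (t : List α) (k l : ℕ), a = wpow t k ∧ b = wpow t l := by
  intro N
  induction N with
  | zero =>
      intro a b hlen _
      have ha : a = [] := List.length_eq_zero_iff.mp (by omega)
      have hb : b = [] := List.length_eq_zero_iff.mp (by omega)
      exact ⟨[], 0, 0, by simp [ha, wpow_zero], by simp [hb, wpow_zero]⟩
  | succ n ih =>
      intro a b hlen hcomm
      rcases eq_or_ne a [] with ha | ha
      · exact ⟨b, 0, 1, by simp [ha, wpow_zero], by simp [wpow_one]⟩
      rcases eq_or_ne b [] with hb | hb
      · exact ⟨a, 1, 0, by simp [wpow_one], by simp [hb, wpow_zero]⟩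
      have halen : 1 ≤ a.length := by
        cases a with
        | nil => exact absurd rfl ha
        | cons x xs => simp
      have hblen : 1 ≤ b.length := by
        cases b with
        | nil => exact absurd rfl hb
        | cons x xs => simp
      rcases le_total a.length b.length with hab | hab
      · -- a is a prefix of b : b = a ++ c
        have hpre : a <+: b :=
          List.prefix_of_prefix_length_le ⟨b, hcomm⟩ (List.prefix_append b a) hab
        obtain ⟨c, hc⟩ := hpre
        have hcomm' : a ++ c = c ++ a := by
          have h1 : a ++ (a ++ c) = (a ++ c) ++ a := by rw [hc]; exact hcomm
          simpa [List.append_assoc] using h1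
        have hlen' : a.length + c.length ≤ n := by
          have : b.length = a.length + c.length := by rw [← hc]; simp
          omega
        obtain ⟨t, k, l, hak, hcl⟩ := ih a c hlen' hcomm'
        exact ⟨t, k, k + l, hak, by rw [← hc, hak, hcl, ← wpow_add]⟩
      · -- b is a prefix of a : a = b ++ c
        have hpre : b <+: a :=
          List.prefix_of_prefix_length_le ⟨a, hcomm.symm⟩ (List.prefix_append a b) hab
        obtain ⟨c, hc⟩ := hpre
        have hcomm' : b ++ c = c ++ b := by
          have h1 : b ++ (b ++ c) = (b ++ c) ++ b := by rw [hc]; exact hcomm.symm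
          simpa [List.append_assoc] using h1
        have hlen' : b.length + c.length ≤ n := by
          have : a.length = b.length + c.length := by rw [← hc]; simp
          omega
        obtain ⟨t, k, l, hbk, hcl⟩ := ih b c hlen' hcomm'
        exact ⟨t, k + l, k, by rw [← hc, hbk, hcl, ← wpow_add], hbk⟩

theorem stmt_0 {α : Type*} (w : List α) (hw : w ≠ []) :
    Primitive w ↔
      ∀ (m : ℕ) (u v : List α), u ≠ [] → v ≠ [] → wpow w m = u ++ w ++ v →
        ∃ n n' : ℕ, n < m ∧ n' < m ∧ u = wpow w n ∧ v = wpow w n' := by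
  have hL : 0 < w.length := List.length_pos_iff.mpr hw
  constructor
  · -- primitive → factor condition
    rintro ⟨-, hprim⟩ m u v hu hv heq
    have hul : 0 < u.length := List.length_pos_iff.mpr hu
    have hvl : 0 < v.length := List.length_pos_iff.mpr hv
    have hlen : m * w.length = u.length + (w.length + v.length) := by
      have := congrArg List.length heq
      simpa [wpow_length, List.length_append, Nat.add_assoc] using this
    obtain ⟨q, r, hqr, hrL⟩ : ∃ q r, u.length = q * w.length + r ∧ r < w.length :=
      ⟨u.length / w.length, u.length % w.length,
        by rw [Nat.mul_comm]; exact (Nat.div_add_mod _ _).symm, Nat.mod_lt _ hL⟩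
    rcases eq_or_ne r 0 with hr0 | hr0
    · -- occurrence at a multiple of w.length : u and v are powers of w
      have huq : u.length = q * w.length := by omega
      have hq1 : 1 ≤ q := by
        by_contra h
        have hq0 : q = 0 := by omega
        rw [hq0, Nat.zero_mul] at huq
        omega
      have hqmul : (q + 1) * w.length < m * w.length := by
        rw [Nat.succ_mul]; omega
      have hqm : q + 1 < m := Nat.lt_of_mul_lt_mul_right hqmul
      -- u = wpow w q
      have hdecomp : wpow w m = wpow w q ++ wpow w (m - q) := by
        rw [← wpow_add]; congr 1; omega
      have hu_eq : u = wpow w q := by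
        have h1 : wpow w m = u ++ (w ++ v) := by rw [heq, List.append_assoc]
        rw [hdecomp] at h1
        exact (List.append_inj h1.symm (by rw [wpow_length, huq])).1
      -- v = wpow w (m - q - 1)
      have hdecomp2 : wpow w m = wpow w (q + 1) ++ wpow w (m - q - 1) := by
        rw [← wpow_add]; congr 1; omega
      have hv_eq : v = wpow w (m - q - 1) := by
        have h1 : wpow w (q + 1) ++ wpow w (m - q - 1) = (u ++ w) ++ v := by
          rw [← hdecomp2, heq]
        have h2 : (wpow w (q + 1)).length = (u ++ w).length := by
          simp [wpow_length, huq, Nat.succ_mul]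
        exact (List.append_inj h1 h2).2.symm
      exact ⟨q, m - q - 1, by omega, by omega, hu_eq, hv_eq⟩
    · -- occurrence at a non-multiple: contradiction with primitivity
      exfalso
      have hrpos : 0 < r := Nat.pos_of_ne_zero hr0
      have hqmul : (q + 1) * w.length < m * w.length := by
        rw [Nat.succ_mul]; omega
      have hq2 : q + 2 ≤ m := Nat.lt_of_mul_lt_mul_right hqmul
      have hdecomp : wpow w m = wpow w q ++ (w ++ (w ++ wpow w (m - q - 2))) := by
        have h : q + (1 + (1 + (m - q - 2))) = m := by omega
        conv_lhs => rw [← h]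
        rw [wpow_add, wpow_add, wpow_add, wpow_one]
      set a := u.drop (q * w.length) with hadef
      have hal : a.length = r := by rw [hadef, List.length_drop]; omega
      have hkey : w ++ (w ++ wpow w (m - q - 2)) = a ++ (w ++ v) := by
        have h2 : List.drop (q * w.length) (wpow w q ++ (w ++ (w ++ wpow w (m - q - 2)))) =
            w ++ (w ++ wpow w (m - q - 2)) := by
          rw [List.drop_append,
            List.drop_eq_nil_of_le (le_of_eq (wpow_length w q)), wpow_length,
            Nat.sub_self, List.drop_zero, List.nil_append]
        have h3 : List.drop (q * w.length) (wpow w m) = a ++ (w ++ v) := by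
          rw [heq, List.append_assoc, List.drop_append]
          have h4 : q * w.length - u.length = 0 := by omega
          rw [h4, List.drop_zero, hadef]
        rw [← h2, ← hdecomp, h3]
      set z := w.drop r with hzdef
      have hzl : z.length = w.length - r := by rw [hzdef, List.length_drop]
      have hwaz : w = a ++ z := by
        have h1 := congrArg (List.take r) hkey
        rw [List.take_left' hal] at h1
        rw [List.take_append] at h1
        have h5 : r - w.length = 0 := by omega
        rw [h5, List.take_zero, List.append_nil] at h1
        rw [← h1, hzdef, List.take_append_drop]
      have hcomm : z ++ a = a ++ z := by
        have h1 : a ++ (z ++ (w ++ wpow w (m - q - 2))) = a ++ (w ++ v) := by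
          rw [← List.append_assoc, ← hwaz]; exact hkey
        have h2 : z ++ (w ++ wpow w (m - q - 2)) = w ++ v :=
          List.append_cancel_left h1
        generalize hW : wpow w (m - q - 2) = W at h2
        rw [hwaz] at h2
        have h3 : (z ++ a) ++ (z ++ W) = (a ++ z) ++ v := by
          simpa [List.append_assoc] using h2
        exact (List.append_inj h3 (by simp [Nat.add_comm])).1
      obtain ⟨t, k, l, hzk, hal'⟩ := comm_pow (z.length + a.length) z a le_rfl hcomm
      have hwt : w = wpow t (l + k) := by rw [hwaz, wpow_add, ← hzk, ← hal']
      have ht : t ≠ [] := by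
        intro h
        rw [h] at hwt
        have hlz : (wpow ([] : List α) (l + k)).length = 0 := by simp [wpow_length]
        rw [← hwt] at hlz; omega
      have hwt' : w = t := hprim t (l + k) ht hwt
      have hlen' : w.length = (l + k) * t.length := by
        have := congrArg List.length hwt; rwa [wpow_length] at this
      have hk1 : 1 ≤ k := by
        rcases Nat.eq_zero_or_pos k with h | h
        · rw [h, wpow_zero] at hzk
          have : z.length = 0 := by rw [hzk]; rfl
          omega
        · exact h
      have hl1 : 1 ≤ l := by
        rcases Nat.eq_zero_or_pos l with h | h
        · rw [h, wpow_zero] at hal'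
          have : a.length = 0 := by rw [hal']; rfl
          omega
        · exact h
      have htL : t.length = w.length := by rw [← hwt']
      have h2lk : 2 ≤ l + k := by omega
      have := Nat.mul_le_mul_right t.length h2lk
      omega
  · -- factor condition → primitive
    intro hfac
    refine ⟨hw, ?_⟩
    intro z m hz hzm
    by_contra hne
    have hm2 : 2 ≤ m := by
      rcases m with _ | _ | m
      · rw [wpow_zero] at hzm; exact (hw hzm).elim
      · rw [wpow_one] at hzm; exact (hne hzm).elim
      · omega
    have hzl : 0 < z.length := List.length_pos_iff.mpr hz
    -- w^2 = z ++ w ++ z^(m-1)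
    have h2 : wpow w 2 = z ++ w ++ wpow z (m - 1) := by
      have hw2 : wpow w 2 = w ++ w := by
        show wpow w (1 + 1) = w ++ w
        rw [wpow_add, wpow_one]
      have e2 : wpow z (1 + (m + (m - 1))) = z ++ (wpow z m ++ wpow z (m - 1)) := by
        rw [wpow_add, wpow_add, wpow_one]
      have e3 : 1 + (m + (m - 1)) = m + m := by omega
      rw [hw2, hzm, ← wpow_add, ← e3, e2, List.append_assoc]
    have hzm1 : wpow z (m - 1) ≠ [] := by
      intro h
      have hl := congrArg List.length h
      rw [wpow_length] at hl
      simp only [List.length_nil] at hl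
      rcases Nat.mul_eq_zero.mp hl with h' | h' <;> omega
    obtain ⟨n, n', hn, hn', hzn, -⟩ := hfac 2 z (wpow z (m - 1)) hz hzm1 h2
    have hn1 : n = 1 := by
      rcases n with _ | _ | n
      · rw [wpow_zero] at hzn; exact (hz hzn).elim
      · rfl
      · omega
    rw [hn1, wpow_one] at hzn
    rw [hzn] at hzm
    have hlw := congrArg List.length hzm
    rw [wpow_length] at hlw
    have := Nat.mul_le_mul_right w.length hm2
    omega
end

section
/- For primitive words w and v that are not conjugate, there exists r ∈ ℕ such that every common factor of w^n and v^m, for any n, m ∈ ℕ, has length at most r. -/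
namespace StmtAux

variable {α : Type*}

/-- `u` has period `p`. -/
def HasPeriod (u : List α) (p : ℕ) : Prop :=
  ∀ i : ℕ, i + p < u.length → u[i]? = u[i + p]?

theorem wpow_succ (w : List α) (n : ℕ) : wpow w (n + 1) = w ++ wpow w n := rfl

theorem wpow_zero (w : List α) : wpow w 0 = [] := rfl

theorem wpow_one (w : List α) : wpow w 1 = w := List.append_nil w

theorem wpow_add (w : List α) (a b : ℕ) : wpow w (a + b) = wpow w a ++ wpow w b := by
  induction a with
  | zero => rw [Nat.zero_add]; rfl
  | succ a ih =>
    rw [show a + 1 + b = (a + b) + 1 by omega, wpow_succ, wpow_succ, ih, List.append_assoc]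

theorem wpow_succ' (w : List α) (n : ℕ) : wpow w (n + 1) = wpow w n ++ w := by
  rw [wpow_add, wpow_one]

theorem length_wpow (w : List α) (n : ℕ) : (wpow w n).length = n * w.length := by
  simp [wpow, List.length_flatten, mul_comm]

theorem hasPeriod_wpow (w : List α) (n : ℕ) : HasPeriod (wpow w n) w.length := by
  intro i hi
  rw [length_wpow] at hi
  match n with
  | 0 => omega
  | (k+1) =>
    have hik : i < k * w.length := by
      have : (k+1) * w.length = k * w.length + w.length := by ring
      omega
    have h1 : (wpow w (k+1))[i]? = (wpow w k)[i]? := by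
      rw [wpow_succ', List.getElem?_append, if_pos (by rw [length_wpow]; omega)]
    have h2 : (wpow w (k+1))[i + w.length]? = (wpow w k)[i]? := by
      rw [wpow_succ, List.getElem?_append_right (by omega)]
      congr 1
      omega
    rw [h1, h2]

theorem hasPeriod_infix {u z : List α} {p : ℕ} (h : u <:+: z) (hz : HasPeriod z p) :
    HasPeriod u p := by
  obtain ⟨s, t, rfl⟩ := h
  intro i hi
  have key : ∀ j, j < u.length → (s ++ u ++ t)[s.length + j]? = u[j]? := by
    intro j hj
    rw [List.append_assoc, List.getElem?_append_right (by omega)]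
    rw [Nat.add_sub_cancel_left, List.getElem?_append, if_pos hj]
  have hlen : (s ++ u ++ t).length = s.length + u.length + t.length := by
    simp [Nat.add_assoc]
  have := hz (s.length + i) (by omega)
  rw [key i (by omega)] at this
  rw [show s.length + i + p = s.length + (i + p) by omega] at this
  rw [key (i + p) hi] at this
  exact this

/-- Weak Fine–Wilf: periods `p` and `q` and length ≥ `p + q` give period `gcd p q`. -/
theorem fine_wilf (N : ℕ) : ∀ (p q : ℕ) (u : List α), p + q ≤ N → 0 < p → 0 < q →
    p + q ≤ u.length → HasPeriod u p → HasPeriod u q → HasPeriod u (Nat.gcd p q) := by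
  induction N with
  | zero => intro p q u hN hp; omega
  | succ N ih =>
    intro p q u hN hp hq hlen hP hQ
    rcases lt_trichotomy p q with h | h | h
    · have hqp : HasPeriod u (q - p) := by
        intro i hi
        by_cases hc : i + q < u.length
        · have e1 := hP (i + (q - p)) (by omega)
          have e2 := hQ i (by omega)
          rw [show i + (q - p) + p = i + q by omega] at e1
          rw [e2, e1]
        · have e1 := hP (i - p) (by omega)
          have e2 := hQ (i - p) (by omega)
          rw [show i - p + p = i by omega] at e1
          rw [show i - p + q = i + (q - p) by omega] at e2
          rw [← e1, e2]
      have hres := ih p (q - p) u (by omega) hp (by omega) (by omega) hP hqp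
      rwa [Nat.gcd_comm p (q - p), Nat.gcd_sub_self_left h.le, Nat.gcd_comm q p] at hres
    · subst h
      rwa [Nat.gcd_self]
    · have hpq : HasPeriod u (p - q) := by
        intro i hi
        by_cases hc : i + p < u.length
        · have e1 := hQ (i + (p - q)) (by omega)
          have e2 := hP i (by omega)
          rw [show i + (p - q) + q = i + p by omega] at e1
          rw [e2, e1]
        · have e1 := hQ (i - q) (by omega)
          have e2 := hP (i - q) (by omega)
          rw [show i - q + q = i by omega] at e1
          rw [show i - q + p = i + (p - q) by omega] at e2
          rw [← e1, e2]
      have hres := ih (p - q) q u (by omega) (by omega) hq (by omega) hpq hQ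
      rwa [Nat.gcd_sub_self_left h.le] at hres

/-- A `g`-periodic list's prefix of length `g*t` is a power of its prefix of length `g`. -/
theorem take_mul_of_period (g : ℕ) (hg : 0 < g) :
    ∀ (t : ℕ) (u : List α), HasPeriod u g → g * t ≤ u.length →
      u.take (g * t) = wpow (u.take g) t := by
  intro t
  induction t with
  | zero => intro u _ _; simp [wpow_zero]
  | succ t ih =>
    intro u hP hle
    rcases Nat.eq_zero_or_pos t with rfl | ht
    · simp [wpow_one]
    · have key : u.take (g * (t + 1)) = u.take g ++ (u.drop g).take (g * t) := by
        rw [show g * (t + 1) = g + g * t by ring, List.take_add]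
      have hdropP : HasPeriod (u.drop g) g := by
        intro i hi
        rw [List.length_drop] at hi
        rw [List.getElem?_drop, List.getElem?_drop]
        have := hP (g + i) (by omega)
        rwa [show g + i + g = g + (i + g) by omega] at this
      have hlen2 : g * t ≤ (u.drop g).length := by
        rw [List.length_drop]
        have : g * (t + 1) = g * t + g := by ring
        omega
      have ihh := ih (u.drop g) hdropP hlen2
      have hfront : (u.drop g).take g = u.take g := by
        apply List.ext_getElem?
        intro i
        rw [List.getElem?_take, List.getElem?_take, List.getElem?_drop]
        by_cases hig : i < g
        · rw [if_pos hig, if_pos hig]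
          have := hP i (by nlinarith)
          rw [show g + i = i + g by omega]
          exact this.symm
        · rw [if_neg hig, if_neg hig]
      rw [key, ihh, hfront, ← wpow_succ]

theorem wpow_conj (x y : List α) (k : ℕ) :
    wpow (y ++ x) (k + 1) = y ++ wpow (x ++ y) k ++ x := by
  induction k with
  | zero => simp [wpow_one, wpow_zero]
  | succ k ihk =>
    rw [wpow_succ, ihk, wpow_succ]
    simp [List.append_assoc]

theorem rotate_wpow (t : List α) (ht : t ≠ []) (k : ℕ) :
    ∀ j : ℕ, (wpow t k).rotate j = wpow (t.rotate (j % t.length)) k := by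
  have hg : 0 < t.length := List.length_pos_iff.mpr ht
  rcases Nat.eq_zero_or_pos k with rfl | hk
  · intro j; simp [wpow_zero]
  · intro j
    induction j using Nat.strong_induction_on with
    | _ j ihj =>
      by_cases hj : j < t.length
      · have hjlen : j ≤ (wpow t k).length := by
          rw [length_wpow]; nlinarith
        rw [List.rotate_eq_drop_append_take hjlen,
          Nat.mod_eq_of_lt hj,
          List.rotate_eq_drop_append_take hj.le]
        obtain ⟨k', rfl⟩ : ∃ k', k = k' + 1 := ⟨k - 1, by omega⟩
        rw [wpow_succ, List.drop_append_of_le_length hj.le,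
          List.take_append_of_le_length hj.le]
        rw [show t = List.take j t ++ List.drop j t from (List.take_append_drop j t).symm]
        rw [wpow_conj]
        simp [List.append_assoc, List.take_append_drop]
      · push_neg at hj
        have step : (wpow t k).rotate t.length = wpow t k := by
          obtain ⟨k', rfl⟩ : ∃ k', k = k' + 1 := ⟨k - 1, by omega⟩
          conv_lhs => rw [wpow_succ]
          rw [List.rotate_eq_drop_append_take
              (show t.length ≤ (t ++ wpow t k').length by simp),
            List.drop_left, List.take_append_of_le_length le_rfl, List.take_length,
            ← wpow_succ']
        have hrr : (wpow t k).rotate j = ((wpow t k).rotate t.length).rotate (j - t.length) := by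
          rw [List.rotate_rotate]
          congr 1
          omega
        rw [hrr, step, ihj (j - t.length) (by omega)]
        congr 2
        conv_rhs => rw [show j = t.length + (j - t.length) by omega]
        rw [Nat.add_mod_left]

/-- A length-`|w|` window of `w^n` is a rotation of `w`. -/
theorem factor_take (w : List α) (hwne : w ≠ []) (n : ℕ) (s u t : List α)
    (h : s ++ u ++ t = wpow w n) (hlen : w.length ≤ u.length) :
    u.take w.length = w.rotate (s.length % w.length) := by
  have hp : 0 < w.length := List.length_pos_iff.mpr hwne
  have hlens := congrArg List.length h
  simp only [List.length_append] at hlens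
  have hn : 0 < n := by
    rcases Nat.eq_zero_or_pos n with rfl | h' 
    · rw [wpow_zero] at hlens
      simp only [List.length_nil] at hlens
      omega
    · exact h'
  have h1 : u.take w.length = ((wpow w n).drop s.length).take w.length := by
    rw [← h, List.append_assoc, List.drop_left, List.take_append_of_le_length hlen]
  have hslen : s.length + w.length ≤ (wpow w n).length := by omega
  have h2 : ((wpow w n).rotate s.length).take w.length
      = ((wpow w n).drop s.length).take w.length := by
    rw [List.rotate_eq_drop_append_take (by omega)]
    rw [List.take_append_of_le_length (by rw [List.length_drop, length_wpow]; rw [length_wpow] at hslen; omega)]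
  rw [h1, ← h2, rotate_wpow w hwne n s.length]
  obtain ⟨n', rfl⟩ : ∃ n', n = n' + 1 := ⟨n - 1, by omega⟩
  rw [wpow_succ,
    List.take_append_of_le_length (le_of_eq (List.length_rotate w (s.length % w.length)).symm)]
  exact List.take_of_length_le (le_of_eq (List.length_rotate w (s.length % w.length)))

end StmtAux

open StmtAux in
theorem stmt_6 {α : Type*} (w v : List α) (hw : Primitive w) (hv : Primitive v)
    (hnc : ¬ Conj w v) :
    ∃ r : ℕ, ∀ (n m : ℕ) (u : List α),
      u <:+: wpow w n → u <:+: wpow v m → u.length ≤ r := by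
  refine ⟨w.length + v.length, ?_⟩
  intro n m u hun hvm
  by_contra hlen
  push_neg at hlen
  set p := w.length with hpdef
  set q := v.length with hqdef
  have hp : 0 < p := List.length_pos_iff.mpr hw.1
  have hq : 0 < q := List.length_pos_iff.mpr hv.1
  have hP : HasPeriod u p := hasPeriod_infix hun (hasPeriod_wpow w n)
  have hQ : HasPeriod u q := hasPeriod_infix hvm (hasPeriod_wpow v m)
  set g := Nat.gcd p q with hgdef
  have hg : 0 < g := Nat.gcd_pos_of_pos_left q hp
  have hgp : g ∣ p := Nat.gcd_dvd_left p q
  have hgq : g ∣ q := Nat.gcd_dvd_right p q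
  have hG : HasPeriod u g := fine_wilf (p + q) p q u le_rfl hp hq (by omega) hP hQ
  set t0 := u.take g with ht0def
  have hgu : g ≤ u.length := by
    have h1 : g ≤ p := Nat.le_of_dvd hp hgp
    omega
  have ht0len : t0.length = g := by
    rw [ht0def, List.length_take, Nat.min_eq_left hgu]
  have ht0ne : t0 ≠ [] := by
    intro hc
    rw [hc] at ht0len
    simp at ht0len
    omega
  -- A single-period prefix is a rotation of the base word and a power of t0.
  have key : ∀ (z : List α) (N : ℕ), Primitive z → u <:+: wpow z N → g ∣ z.length →
      0 < z.length → z.length ≤ u.length → z.length = g ∧ ∃ b, b < g ∧ z = t0.rotate b := by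
    intro z N hz hinf hgz hzpos hzle
    obtain ⟨s, t, hst⟩ := hinf
    have htake : u.take z.length = z.rotate (s.length % z.length) :=
      factor_take z hz.1 N s u t hst hzle
    have hpow : u.take z.length = wpow t0 (z.length / g) := by
      have := take_mul_of_period g hg (z.length / g) u hG
        (by rw [Nat.mul_div_cancel' hgz]; exact hzle)
      rwa [Nat.mul_div_cancel' hgz] at this
    set j := s.length % z.length with hjdef
    have hjlt : j < z.length := Nat.mod_lt _ hzpos
    have hzrot : z = (wpow t0 (z.length / g)).rotate (z.length - j) := by
      rw [← hpow, htake, List.rotate_rotate, show j + (z.length - j) = z.length by omega,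
        List.rotate_length]
    rw [rotate_wpow t0 ht0ne _ _] at hzrot
    set b := (z.length - j) % t0.length with hbdef
    have hrotne : t0.rotate b ≠ [] := by
      intro hc
      have hl : t0.length = 0 := by
        have := congrArg List.length hc
        simpa using this
      exact ht0ne (List.length_eq_zero_iff.mp hl)
    have hzeq : z = t0.rotate b := hz.2 _ _ hrotne hzrot
    have hzl : z.length = g := by
      rw [hzeq, List.length_rotate, ht0len]
    refine ⟨hzl, b, ?_, hzeq⟩
    rw [hbdef, ht0len]
    exact Nat.mod_lt _ hg
  obtain ⟨hpg, b₁, hb₁, hweq⟩ := key w n hw hun hgp hp (by omega)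
  obtain ⟨hqg, b₂, hb₂, hveq⟩ := key v m hv hvm hgq hq (by omega)
  -- both w and v are rotations of t0, hence conjugate
  have ht0w : t0 = w.rotate (g - b₁) := by
    rw [hweq, List.rotate_rotate, show b₁ + (g - b₁) = g by omega, ← ht0len,
      List.rotate_length]
  have hvw : v = w.rotate (g - b₁ + b₂) := by
    rw [hveq, ht0w, List.rotate_rotate]
  set c := (g - b₁ + b₂) % g with hcdef
  have hwlen : w.length = g := hpg
  have hclt : c ≤ w.length := by
    rw [hwlen]
    exact (Nat.mod_lt _ hg).le
  have hvc : v = w.rotate c := by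
    rw [hvw, ← List.rotate_mod w (g - b₁ + b₂), hwlen]
  exact hnc ⟨w.take c, w.drop c, (List.take_append_drop c w).symm,
    by rw [hvc, List.rotate_eq_drop_append_take hclt]⟩
end
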